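/- Consider the planar charged oscillator in a constant magnetic field of strength B, governed by the linear system ẍ − Bẏ + αx = 0, ÿ + Bẋ + βy = 0, written as a first-order system ż = A₀z on ℝ⁴ with z = (x, y, ẋ, ẏ). If α < 0, β < 0 and B² + α + β > 2√(αβ), then every eigenvalue λ ∈ ℂ of the 4×4 real matrix A₀ has real part equal to zero (gyroscopic stabilization). -/

import Mathlib

/-- The 4×4 matrix of the planar charged oscillator ẍ − Bẏ + αx = 0,
ÿ + Bẋ + βy = 0 written as a first-order system ż = A₀z with z = (x, y, ẋ, ẏ). -/
noncomputable def gyroA (α β B : ℝ) : Matrix (Fin 4) (Fin 4) ℝ :=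
  !![0, 0, 1, 0;
     0, 0, 0, 1;
     -α, 0, 0, B;
     0, -β, -B, 0]

lemma sq_neg_real_re (lam : ℂ) (r : ℝ) (hr : r < 0) (h : lam ^ 2 = (r : ℂ)) :
    lam.re = 0 := by
  have hre : lam.re ^ 2 - lam.im ^ 2 = r := by
    have := congrArg Complex.re h
    simpa [pow_two, Complex.mul_re] using this
  have him : lam.re * lam.im + lam.im * lam.re = 0 := by
    have := congrArg Complex.im h
    simpa [pow_two, Complex.mul_im] using this
  have him' : lam.re * lam.im = 0 := by linarith
  rcases mul_eq_zero.1 him' with h1 | h2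
  · exact h1
  · nlinarith [sq_nonneg lam.re]

/-- Gyroscopic stabilization: if α < 0, β < 0 and B² + α + β > 2√(αβ), then every
eigenvalue of A₀ is purely imaginary. -/
theorem stmt0 (α β B : ℝ) (hα : α < 0) (hβ : β < 0)
    (hB : B ^ 2 + α + β > 2 * Real.sqrt (α * β)) :
    ∀ lam : ℂ,
      (lam • (1 : Matrix (Fin 4) (Fin 4) ℂ) - (gyroA α β B).map Complex.ofReal).det = 0 →
      lam.re = 0 := by
  intro lam hdet
  set p : ℝ := B ^ 2 + α + β with hp
  set q : ℝ := α * β with hq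
  have hq0 : 0 < q := mul_pos_of_neg_of_neg hα hβ
  have hsq : Real.sqrt q ≥ 0 := Real.sqrt_nonneg q
  have hp0 : 0 < p := lt_of_le_of_lt (by linarith) hB
  have hdisc : 0 < p ^ 2 - 4 * q := by
    have h4q : (2 * Real.sqrt q) ^ 2 = 4 * q := by
      rw [mul_pow, Real.sq_sqrt hq0.le]; ring
    nlinarith [hB]
  set s : ℝ := Real.sqrt (p ^ 2 - 4 * q) with hs
  have hs2 : s ^ 2 = p ^ 2 - 4 * q := Real.sq_sqrt hdisc.le
  have hs0 : 0 ≤ s := Real.sqrt_nonneg _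
  have hsltp : s < p := by nlinarith
  set r₁ : ℝ := (-p + s) / 2 with hr₁
  set r₂ : ℝ := (-p - s) / 2 with hr₂
  have hr₁neg : r₁ < 0 := by rw [hr₁]; linarith
  have hr₂neg : r₂ < 0 := by rw [hr₂]; linarith
  -- characteristic polynomial
  have hchar : lam ^ 4 + (p : ℂ) * lam ^ 2 + (q : ℂ) = 0 := by
    rw [← hdet]
    simp [gyroA, Matrix.det_succ_row_zero, Fin.sum_univ_succ, Matrix.smul_apply,
      Matrix.one_apply, Fin.succ_ne_zero, Fin.succAbove, hp, hq]
    ring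
  have hfac : (lam ^ 2 - (r₁ : ℂ)) * (lam ^ 2 - (r₂ : ℂ)) = 0 := by
    have h1 : (r₁ : ℝ) + r₂ = -p := by rw [hr₁, hr₂]; ring
    have h2 : (r₁ : ℝ) * r₂ = q := by
      rw [hr₁, hr₂]
      have : (-p + s) / 2 * ((-p - s) / 2) = (p ^ 2 - s ^ 2) / 4 := by ring
      rw [this, hs2]; ring
    have h1' : (r₁ : ℂ) + (r₂ : ℂ) = -(p : ℂ) := by exact_mod_cast congrArg Complex.ofReal h1
    have h2' : (r₁ : ℂ) * (r₂ : ℂ) = (q : ℂ) := by exact_mod_cast congrArg Complex.ofReal h2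
    have : (lam ^ 2 - (r₁ : ℂ)) * (lam ^ 2 - (r₂ : ℂ))
        = lam ^ 4 - ((r₁ : ℂ) + (r₂ : ℂ)) * lam ^ 2 + (r₁ : ℂ) * (r₂ : ℂ) := by ring
    rw [this, h1', h2', ← hchar]; ring
  rcases mul_eq_zero.1 hfac with h | h
  · exact sq_neg_real_re lam r₁ hr₁neg (sub_eq_zero.1 h)
  · exact sq_neg_real_re lam r₂ hr₂neg (sub_eq_zero.1 h)
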